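/- Let ℓ ≥ 1 be an integer and suppose that for each integer m with 1 ≤ m ≤ ℓ there is a constant c_m > 0 such that |π(y) − α_m(y)| ≤ c_m·y/(log y)^{m+1} for all y ≥ 2. Define S_n(x) = Σ_{p ≤ √x} (1/p)·(1 − (log p)/(log x))^{−n}. Then Σ_{p ≤ √x} π(x/p) = Σ_{n=1}^{ℓ} (n−1)!·x·S_n(x)/(log x)^n + o(x/(log x)^ℓ) as x → ∞. -/

import Mathlib

open Finset Filter

/-- The finite set of primes `p ≤ y` (for a real bound `y`). -/
noncomputable def primesUpTo (y : ℝ) : Finset ℕ :=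
  (Finset.range (⌊y⌋₊ + 1)).filter Nat.Prime

/-- The prime counting function `π(x)`: the number of primes `p ≤ x`. -/
noncomputable def primePi (x : ℝ) : ℕ := (primesUpTo x).card

/-- `α_m(x) = (x / log x) · ∑_{i=0}^{m-1} i! / (log x)^i`. -/
noncomputable def alpha (m : ℕ) (x : ℝ) : ℝ :=
  x / Real.log x * ∑ i ∈ Finset.range m, (Nat.factorial i : ℝ) / (Real.log x) ^ i

/-- `S_n(x) = ∑_{p ≤ √x} (1/p) (1 - log p / log x)^{-n}`. -/
noncomputable def S (n : ℕ) (x : ℝ) : ℝ :=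
  ∑ p ∈ primesUpTo (Real.sqrt x),
    (1 / (p : ℝ)) * (1 - Real.log p / Real.log x) ^ (-(n : ℤ))




lemma mem_primesUpTo {p : ℕ} {y : ℝ} (hy : 0 ≤ y) :
    p ∈ primesUpTo y ↔ p.Prime ∧ (p : ℝ) ≤ y := by
  simp [primesUpTo, Nat.lt_succ_iff, Nat.le_floor_iff hy, and_comm]

lemma primePi_mono {y z : ℝ} (h : y ≤ z) : primePi y ≤ primePi z := by
  apply Finset.card_le_card
  intro p hp
  simp only [primesUpTo, Finset.mem_filter, Finset.mem_range, Nat.lt_succ_iff] at hp ⊢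
  exact ⟨le_trans hp.1 (Nat.floor_mono h), hp.2⟩


lemma alpha_one (y : ℝ) : alpha 1 y = y / Real.log y := by
  simp [alpha]

lemma primePi_upper {c : ℝ} (hc : 0 < c)
    (h : ∀ y : ℝ, 2 ≤ y → |(primePi y : ℝ) - alpha 1 y| ≤ c * y / (Real.log y) ^ 2) :
    ∀ y : ℝ, 2 ≤ y → (primePi y : ℝ) ≤ (1 + c / Real.log 2) * y / Real.log y := by
  intro y hy
  have hly : Real.log 2 ≤ Real.log y := Real.log_le_log (by norm_num) hy
  have hl2 : (0:ℝ) < Real.log 2 := Real.log_pos (by norm_num)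
  have hlY : 0 < Real.log y := lt_of_lt_of_le hl2 hly
  have h1 := h y hy
  rw [alpha_one] at h1
  have h2 : (primePi y : ℝ) ≤ y / Real.log y + c * y / (Real.log y) ^ 2 := by
    have := abs_le.mp h1
    linarith [this.2]
  have h3 : c * y / (Real.log y) ^ 2 ≤ (c / Real.log 2) * y / Real.log y := by
    rw [div_le_div_iff₀ (by positivity) hlY]
    have hy0 : (0:ℝ) ≤ y := by linarith
    calc c * y * Real.log y = (c * Real.log y) * y := by ring
    _ ≤ (c / Real.log 2 * (Real.log y)^2) * y := by
        apply mul_le_mul_of_nonneg_right _ hy0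
        rw [div_mul_eq_mul_div, le_div_iff₀ hl2]
        have : Real.log 2 ≤ Real.log y := hly
        nlinarith [mul_le_mul_of_nonneg_left hly (mul_nonneg hc.le hlY.le)]
    _ = c / Real.log 2 * y * (Real.log y)^2 := by ring
  calc (primePi y : ℝ) ≤ y / Real.log y + c * y / (Real.log y) ^ 2 := h2
  _ ≤ y / Real.log y + (c / Real.log 2) * y / Real.log y := by linarith
  _ = (1 + c / Real.log 2) * y / Real.log y := by ring

noncomputable def LL (z : ℝ) : ℝ := ∑ p ∈ primesUpTo z, 1 / (p : ℝ)

lemma LL_nonneg (z : ℝ) : 0 ≤ LL z :=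
  Finset.sum_nonneg fun p _ => by positivity

lemma LL_dyadic {C : ℝ} (hC : 0 < C)
    (hpi : ∀ y : ℝ, 2 ≤ y → (primePi y : ℝ) ≤ C * y / Real.log y)
    (z : ℝ) :
    LL z ≤ ∑ k ∈ Finset.range (Nat.log 2 ⌊z⌋₊ + 1), (2 * C / Real.log 2) / (k + 1) := by
  have hl2 : (0:ℝ) < Real.log 2 := Real.log_pos (by norm_num)
  rw [LL, ← Finset.sum_fiberwise_of_maps_to (g := fun p => Nat.log 2 p)
    (t := Finset.range (Nat.log 2 ⌊z⌋₊ + 1))]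
  · apply Finset.sum_le_sum
    intro k _
    set D := (2 * C / Real.log 2)
    have hfiber : ((primesUpTo z).filter (fun p => Nat.log 2 p = k)) ⊆
        primesUpTo ((2:ℝ) ^ (k+1)) := by
      intro p hp
      simp only [Finset.mem_filter] at hp
      obtain ⟨hp1, hp2⟩ := hp
      have hprime : p.Prime := by
        simp only [primesUpTo, Finset.mem_filter] at hp1; exact hp1.2
      have hplt : p < 2 ^ (k+1) := by
        have := Nat.lt_pow_succ_log_self (by norm_num : 1 < 2) p
        rwa [hp2] at this
      rw [mem_primesUpTo (by positivity)]
      refine ⟨hprime, ?_⟩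
      calc (p:ℝ) ≤ ((2^(k+1) : ℕ) : ℝ) := by exact_mod_cast hplt.le
      _ = (2:ℝ)^(k+1) := by push_cast; ring
    have hcard : (((primesUpTo z).filter (fun p => Nat.log 2 p = k)).card : ℝ)
        ≤ C * 2^(k+1) / ((k+1) * Real.log 2) := by
      have h1 : ((primesUpTo z).filter (fun p => Nat.log 2 p = k)).card
          ≤ primePi ((2:ℝ)^(k+1)) := Finset.card_le_card hfiber
      have h2 := hpi ((2:ℝ)^(k+1)) (by
        calc (2:ℝ) = 2^1 := by norm_num
        _ ≤ 2^(k+1) := by apply pow_le_pow_right₀ (by norm_num); omega)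
      rw [Real.log_pow] at h2
      calc (((primesUpTo z).filter (fun p => Nat.log 2 p = k)).card : ℝ)
          ≤ (primePi ((2:ℝ)^(k+1)) : ℝ) := by exact_mod_cast h1
      _ ≤ C * 2^(k+1) / ((k+1) * Real.log 2) := by
          convert h2 using 2; push_cast; ring
    have hterm : ∀ p ∈ (primesUpTo z).filter (fun p => Nat.log 2 p = k),
        1 / (p:ℝ) ≤ ((2:ℝ)^k)⁻¹ := by
      intro p hp
      simp only [Finset.mem_filter] at hp
      have hprime : p.Prime := by
        simp only [primesUpTo, Finset.mem_filter] at hp; exact hp.1.2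
      have hge : 2^k ≤ p := by
        have := Nat.pow_log_le_self 2 hprime.pos.ne'
        rwa [hp.2] at this
      rw [one_div]
      apply inv_anti₀ (by positivity)
      exact_mod_cast hge
    calc ∑ p ∈ (primesUpTo z).filter (fun p => Nat.log 2 p = k), 1/(p:ℝ)
        ≤ ∑ _p ∈ (primesUpTo z).filter (fun p => Nat.log 2 p = k), ((2:ℝ)^k)⁻¹ :=
          Finset.sum_le_sum hterm
    _ = (((primesUpTo z).filter (fun p => Nat.log 2 p = k)).card : ℝ) * ((2:ℝ)^k)⁻¹ := by
          rw [Finset.sum_const, nsmul_eq_mul]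
    _ ≤ (C * 2^(k+1) / ((k+1) * Real.log 2)) * ((2:ℝ)^k)⁻¹ := by
          apply mul_le_mul_of_nonneg_right hcard (by positivity)
    _ = D / (k+1) := by
          simp only [D]
          field_simp
          ring
  · intro p hp
    simp only [primesUpTo, Finset.mem_filter, Finset.mem_range, Nat.lt_succ_iff] at hp ⊢
    exact Nat.log_mono_right hp.1

lemma harmonic_split {D : ℝ} (hD : 0 ≤ D) (K0 K : ℕ) :
    ∑ k ∈ Finset.range K, D / (k + 1) ≤ D * K0 + D * K / (K0 + 1) := by
  have : ∑ k ∈ Finset.range K, D / (k + 1)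
      ≤ ∑ k ∈ Finset.range K, (if k < K0 then D else D / (K0 + 1)) := by
    apply Finset.sum_le_sum
    intro k _
    by_cases h : k < K0
    · simp only [h, if_true]
      apply div_le_self hD
      have : (0:ℝ) ≤ k := Nat.cast_nonneg k
      linarith
    · simp only [h, if_false]
      apply div_le_div_of_nonneg_left hD (by positivity)
      have : K0 ≤ k := Nat.le_of_not_lt h
      have : (K0:ℝ) ≤ k := by exact_mod_cast this
      linarith
  refine this.trans ?_
  rw [Finset.sum_ite]
  have h1 : ∑ _x ∈ (Finset.range K).filter (· < K0), D
      = ((Finset.range K).filter (· < K0)).card * D := by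
    rw [Finset.sum_const, nsmul_eq_mul]
  have h2 : ∑ _x ∈ (Finset.range K).filter (¬ · < K0), (D / (K0+1))
      = ((Finset.range K).filter (¬ · < K0)).card * (D / (K0+1)) := by
    rw [Finset.sum_const, nsmul_eq_mul]
  rw [h1, h2]
  have c1 : ((Finset.range K).filter (· < K0)).card ≤ K0 := by
    have : (Finset.range K).filter (· < K0) ⊆ Finset.range K0 := by
      intro x hx; simp only [Finset.mem_filter, Finset.mem_range] at hx ⊢; exact hx.2
    simpa using Finset.card_le_card this
  have c2 : ((Finset.range K).filter (¬ · < K0)).card ≤ K :=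
    le_trans (Finset.card_filter_le _ _) (by simp)
  have : (((Finset.range K).filter (· < K0)).card : ℝ) * D ≤ K0 * D := by
    apply mul_le_mul_of_nonneg_right (by exact_mod_cast c1) hD
  have h4 : (((Finset.range K).filter (¬ · < K0)).card : ℝ) * (D / (K0+1))
      ≤ K * (D / (K0+1)) := by
    apply mul_le_mul_of_nonneg_right (by exact_mod_cast c2) (by positivity)
  calc _ ≤ (K0:ℝ) * D + K * (D / (K0+1)) := by linarith
  _ = D * K0 + D * K / (K0 + 1) := by ring

lemma LL_isLittleO {C : ℝ} (hC : 0 < C)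
    (hpi : ∀ y : ℝ, 2 ≤ y → (primePi y : ℝ) ≤ C * y / Real.log y) :
    LL =o[atTop] Real.log := by
  have hl2 : (0:ℝ) < Real.log 2 := Real.log_pos (by norm_num)
  set D := 2 * C / Real.log 2 with hDdef
  have hD : 0 < D := by positivity
  rw [Asymptotics.isLittleO_iff]
  intro ε hε
  set K0 : ℕ := ⌈2 * D / (ε * Real.log 2)⌉₊ with hK0def
  have hK0 : D / (K0 + 1) ≤ ε * Real.log 2 / 2 := by
    have h1 : 2 * D / (ε * Real.log 2) ≤ (K0 : ℝ) := Nat.le_ceil _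
    rw [div_le_iff₀ (by positivity)] at h1
    rw [div_le_iff₀ (by positivity)]
    nlinarith [mul_pos hε hl2]
  set A : ℝ := (2 / ε) * (D * K0 + ε * Real.log 2 / 2) with hAdef
  filter_upwards [eventually_ge_atTop (max 2 (Real.exp A))] with z hz
  have hz2 : (2:ℝ) ≤ z := le_trans (le_max_left _ _) hz
  have hzA : Real.exp A ≤ z := le_trans (le_max_right _ _) hz
  have hlogzA : A ≤ Real.log z := by
    rw [← Real.log_exp A]
    exact Real.log_le_log (Real.exp_pos A) hzA
  have hlogz : 0 < Real.log z := Real.log_pos (by linarith)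
  set K : ℕ := Nat.log 2 ⌊z⌋₊ with hKdef
  have hfl : 1 ≤ ⌊z⌋₊ := (Nat.one_le_floor_iff z).mpr (by linarith)
  have hKlog : (K : ℝ) * Real.log 2 ≤ Real.log z := by
    have h2K : (2:ℕ)^K ≤ ⌊z⌋₊ := Nat.pow_log_le_self 2 (by omega)
    have h2KR : (2:ℝ)^K ≤ z := by
      calc (2:ℝ)^K = ((2^K : ℕ) : ℝ) := by push_cast; ring
      _ ≤ (⌊z⌋₊ : ℝ) := by exact_mod_cast h2K
      _ ≤ z := Nat.floor_le (by linarith)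
    calc (K:ℝ) * Real.log 2 = Real.log ((2:ℝ)^K) := by rw [Real.log_pow]
    _ ≤ Real.log z := Real.log_le_log (by positivity) h2KR
  have hmain : LL z ≤ ε * Real.log z := by
    calc LL z ≤ ∑ k ∈ Finset.range (K + 1), D / (k + 1) := LL_dyadic hC hpi z
    _ ≤ D * K0 + D * (K + 1) / (K0 + 1) := by
        have := harmonic_split hD.le K0 (K+1)
        push_cast at this ⊢
        linarith
    _ = D * K0 + ((K:ℝ) + 1) * (D / (K0 + 1)) := by push_cast; ring
    _ ≤ D * K0 + ((K:ℝ) + 1) * (ε * Real.log 2 / 2) := by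
        apply add_le_add_right
        apply mul_le_mul_of_nonneg_left hK0 (by positivity)
    _ ≤ D * K0 + (Real.log z / Real.log 2 + 1) * (ε * Real.log 2 / 2) := by
        apply add_le_add_right
        apply mul_le_mul_of_nonneg_right _ (by positivity)
        rw [div_add' _ _ _ hl2.ne', le_div_iff₀ hl2]
        linarith
    _ = D * K0 + ε * Real.log 2 / 2 + (ε / 2) * Real.log z := by field_simp; ring
    _ ≤ (ε / 2) * Real.log z + (ε / 2) * Real.log z := by
        have : D * K0 + ε * Real.log 2 / 2 ≤ (ε / 2) * Real.log z := by
          have : (ε / 2) * A = D * K0 + ε * Real.log 2 / 2 := by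
            rw [hAdef]; field_simp
          nlinarith
        linarith
    _ = ε * Real.log z := by ring
  rw [Real.norm_eq_abs, Real.norm_eq_abs, abs_of_nonneg (LL_nonneg z),
    abs_of_nonneg hlogz.le]
  exact hmain


lemma log_p_le {x : ℝ} (hx : 4 ≤ x) {p : ℕ} (hp : p ∈ primesUpTo (Real.sqrt x)) :
    Real.log p ≤ Real.log x / 2 := by
  have hple : (p:ℝ) ≤ Real.sqrt x := ((mem_primesUpTo (Real.sqrt_nonneg x)).mp hp).2
  have hppos : (0:ℝ) < p := by
    exact_mod_cast ((mem_primesUpTo (Real.sqrt_nonneg x)).mp hp).1.pos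
  calc Real.log p ≤ Real.log (Real.sqrt x) := Real.log_le_log hppos hple
  _ = Real.log x / 2 := Real.log_sqrt (by linarith)

lemma sum_alpha_eq (ℓ : ℕ) {x : ℝ} (hx : 4 ≤ x) :
    ∑ n ∈ Finset.Icc 1 ℓ,
        (Nat.factorial (n - 1) : ℝ) * (x * S n x) / (Real.log x) ^ n
      = ∑ p ∈ primesUpTo (Real.sqrt x), alpha ℓ (x / p) := by
  have hlogx : 0 < Real.log x := Real.log_pos (by linarith)
  have hswap : ∑ n ∈ Finset.Icc 1 ℓ,
      (Nat.factorial (n - 1) : ℝ) * (x * S n x) / (Real.log x) ^ n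
      = ∑ p ∈ primesUpTo (Real.sqrt x), ∑ n ∈ Finset.Icc 1 ℓ,
          (Nat.factorial (n - 1) : ℝ) * (x *
            ((1 / (p : ℝ)) * (1 - Real.log p / Real.log x) ^ (-(n : ℤ))))
            / (Real.log x) ^ n := by
    rw [Finset.sum_comm]
    apply Finset.sum_congr rfl
    intro n _
    rw [S, Finset.mul_sum, Finset.mul_sum, Finset.sum_div]
  rw [hswap]
  apply Finset.sum_congr rfl
  intro p hp
  have hple : (p:ℝ) ≤ Real.sqrt x := ((mem_primesUpTo (Real.sqrt_nonneg x)).mp hp).2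
  have hp2 : (2:ℝ) ≤ p := by
    exact_mod_cast ((mem_primesUpTo (Real.sqrt_nonneg x)).mp hp).1.two_le
  have hppos : (0:ℝ) < p := by linarith
  have hlp : Real.log p ≤ Real.log x / 2 := log_p_le hx hp
  set M := Real.log x - Real.log p with hMdef
  have hM : 0 < M := by rw [hMdef]; linarith
  have hlogxp : Real.log (x / p) = M := by
    rw [Real.log_div (by linarith) hppos.ne']
  have key : ∀ n ∈ Finset.Icc 1 ℓ,
      (Nat.factorial (n - 1) : ℝ) * (x *
        ((1 / (p : ℝ)) * (1 - Real.log p / Real.log x) ^ (-(n : ℤ))))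
        / (Real.log x) ^ n
      = (Nat.factorial (n - 1) : ℝ) * (x / p) / M ^ n := by
    intro n _
    have h1 : (1 : ℝ) - Real.log p / Real.log x = M / Real.log x := by
      field_simp [hMdef]
      exact hMdef.symm
    rw [h1]
    rw [zpow_neg, zpow_natCast]
    rw [div_pow]
    rw [inv_div]
    field_simp
  rw [Finset.sum_congr rfl key]
  rw [alpha, hlogxp]
  rw [Finset.mul_sum]
  have hIcc : Finset.Icc 1 ℓ = Finset.Ico 1 (ℓ+1) := by
    rw [Finset.Ico_add_one_right_eq_Icc]
  rw [hIcc, Finset.sum_Ico_eq_sum_range]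
  apply Finset.sum_congr (by norm_num)
  intro i _
  have h1i : 1 + i - 1 = i := by omega
  rw [h1i, add_comm 1 i, pow_succ]
  field_simp

lemma sqrt_tendsto : Tendsto Real.sqrt atTop atTop := by
  apply tendsto_atTop_atTop.mpr
  intro b
  refine ⟨b ^ 2, fun x hx => ?_⟩
  calc b ≤ |b| := le_abs_self b
  _ = Real.sqrt (b ^ 2) := (Real.sqrt_sq_eq_abs b).symm
  _ ≤ Real.sqrt x := Real.sqrt_le_sqrt hx

theorem stmt17 (ℓ : ℕ) (hℓ : 1 ≤ ℓ)
    (hPNT : ∀ m : ℕ, 1 ≤ m → m ≤ ℓ → ∃ c : ℝ, 0 < c ∧ ∀ y : ℝ, 2 ≤ y →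
      |(primePi y : ℝ) - alpha m y| ≤ c * y / (Real.log y) ^ (m + 1)) :
    (fun x : ℝ =>
        (∑ p ∈ primesUpTo (Real.sqrt x), (primePi (x / (p : ℝ)) : ℝ))
          - ∑ n ∈ Finset.Icc 1 ℓ,
              (Nat.factorial (n - 1) : ℝ) * (x * S n x) / (Real.log x) ^ n)
      =o[atTop] (fun x : ℝ => x / (Real.log x) ^ ℓ) := by
  obtain ⟨c, hc, hbound⟩ := hPNT ℓ hℓ le_rfl
  obtain ⟨c1, hc1, hb1⟩ := hPNT 1 le_rfl hℓ
  have hpi := primePi_upper hc1 hb1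
  have hl2 : (0:ℝ) < Real.log 2 := Real.log_pos (by norm_num)
  have hCpos : 0 < 1 + c1 / Real.log 2 := by positivity
  have hLo := LL_isLittleO hCpos hpi
  rw [Asymptotics.isLittleO_iff] at hLo
  rw [Asymptotics.isLittleO_iff]
  intro ε hε
  set c2 : ℝ := c * 2 ^ (ℓ + 1) with hc2def
  have hc2 : 0 < c2 := by positivity
  set δ : ℝ := ε / c2 with hδdef
  have hδ : 0 < δ := by positivity
  have hev := hLo hδ
  filter_upwards [sqrt_tendsto.eventually hev, eventually_ge_atTop (4:ℝ)]
    with x hLx hx4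
  have hx0 : (0:ℝ) < x := by linarith
  have hsq2 : (2:ℝ) ≤ Real.sqrt x := by
    rw [show (2:ℝ) = Real.sqrt 4 by rw [show (4:ℝ) = 2^2 by norm_num, Real.sqrt_sq]; norm_num]
    exact Real.sqrt_le_sqrt hx4
  have hlogx : 0 < Real.log x := Real.log_pos (by linarith)
  have hlogsq : Real.log (Real.sqrt x) = Real.log x / 2 := Real.log_sqrt hx0.le
  -- rewrite difference as a single sum
  have hdiff : (∑ p ∈ primesUpTo (Real.sqrt x), (primePi (x / (p : ℝ)) : ℝ))
      - ∑ n ∈ Finset.Icc 1 ℓ,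
          (Nat.factorial (n - 1) : ℝ) * (x * S n x) / (Real.log x) ^ n
      = ∑ p ∈ primesUpTo (Real.sqrt x),
          ((primePi (x / (p : ℝ)) : ℝ) - alpha ℓ (x / p)) := by
    rw [sum_alpha_eq ℓ hx4, ← Finset.sum_sub_distrib]
  rw [hdiff]
  -- per-prime bound
  have hper : ∀ p ∈ primesUpTo (Real.sqrt x),
      |(primePi (x / (p : ℝ)) : ℝ) - alpha ℓ (x / p)|
        ≤ c2 * (x * (1 / (p:ℝ))) / (Real.log x) ^ (ℓ + 1) := by
    intro p hp
    have hple : (p:ℝ) ≤ Real.sqrt x := ((mem_primesUpTo (Real.sqrt_nonneg x)).mp hp).2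
    have hp2 : (2:ℝ) ≤ p := by
      exact_mod_cast ((mem_primesUpTo (Real.sqrt_nonneg x)).mp hp).1.two_le
    have hppos : (0:ℝ) < p := by linarith
    have hxp2 : (2:ℝ) ≤ x / p := by
      calc (2:ℝ) ≤ Real.sqrt x := hsq2
      _ = x / Real.sqrt x := (Real.div_sqrt).symm
      _ ≤ x / p := by
          apply div_le_div_of_nonneg_left hx0.le hppos
          exact hple
    have hlp : Real.log p ≤ Real.log x / 2 := log_p_le hx4 hp
    have hlogxp : Real.log (x / p) = Real.log x - Real.log p :=
      Real.log_div hx0.ne' hppos.ne'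
    have hlogxp2 : Real.log x / 2 ≤ Real.log (x / p) := by rw [hlogxp]; linarith
    have hlogxppos : 0 < Real.log (x / p) := by linarith
    have h1 := hbound (x / p) hxp2
    refine h1.trans ?_
    have hpow : (Real.log x / 2) ^ (ℓ+1) ≤ (Real.log (x / p)) ^ (ℓ+1) :=
      pow_le_pow_left₀ (by positivity) hlogxp2 _
    have hnum : 0 ≤ c * (x / p) := by positivity
    calc c * (x / p) / (Real.log (x / p)) ^ (ℓ + 1)
        ≤ c * (x / p) / (Real.log x / 2) ^ (ℓ + 1) := by
          apply div_le_div_of_nonneg_left hnum (by positivity) hpow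
    _ = c2 * (x * (1 / (p:ℝ))) / (Real.log x) ^ (ℓ + 1) := by
          rw [hc2def, div_pow]
          field_simp
  -- total bound
  have habs : |∑ p ∈ primesUpTo (Real.sqrt x),
      ((primePi (x / (p : ℝ)) : ℝ) - alpha ℓ (x / p))|
      ≤ c2 * x / (Real.log x) ^ (ℓ + 1) * LL (Real.sqrt x) := by
    calc |∑ p ∈ primesUpTo (Real.sqrt x),
        ((primePi (x / (p : ℝ)) : ℝ) - alpha ℓ (x / p))|
        ≤ ∑ p ∈ primesUpTo (Real.sqrt x),
            |(primePi (x / (p : ℝ)) : ℝ) - alpha ℓ (x / p)| :=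
          Finset.abs_sum_le_sum_abs _ _
    _ ≤ ∑ p ∈ primesUpTo (Real.sqrt x),
            c2 * (x * (1 / (p:ℝ))) / (Real.log x) ^ (ℓ + 1) :=
          Finset.sum_le_sum hper
    _ = c2 * x / (Real.log x) ^ (ℓ + 1) * LL (Real.sqrt x) := by
          rw [LL, Finset.mul_sum]
          apply Finset.sum_congr rfl
          intro p _
          field_simp
  have hLLx : LL (Real.sqrt x) ≤ δ * (Real.log x / 2) := by
    rw [Real.norm_eq_abs, Real.norm_eq_abs, abs_of_nonneg (LL_nonneg _)] at hLx
    calc LL (Real.sqrt x) ≤ δ * |Real.log (Real.sqrt x)| := hLx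
    _ = δ * (Real.log x / 2) := by
        rw [hlogsq, abs_of_nonneg (by linarith)]
  rw [Real.norm_eq_abs, Real.norm_eq_abs]
  calc |∑ p ∈ primesUpTo (Real.sqrt x),
      ((primePi (x / (p : ℝ)) : ℝ) - alpha ℓ (x / p))|
      ≤ c2 * x / (Real.log x) ^ (ℓ + 1) * LL (Real.sqrt x) := habs
  _ ≤ c2 * x / (Real.log x) ^ (ℓ + 1) * (δ * (Real.log x / 2)) := by
      apply mul_le_mul_of_nonneg_left hLLx (by positivity)
  _ = (ε / 2) * (x / (Real.log x) ^ ℓ) := by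
      rw [hδdef, pow_succ]
      field_simp
  _ ≤ ε * |x / (Real.log x) ^ ℓ| := by
      rw [abs_of_nonneg (by positivity)]
      have : 0 ≤ x / (Real.log x) ^ ℓ := by positivity
      nlinarith
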